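/- Let t ≥ 3 be an integer, let G be a t-lollipop-free graph, and let S ⊆ V(G) be such that G[S] is tidy. Then S is a fair split in G. -/
import Mathlib


/-- The `t`-lollipop: `K_t` together with a path on two vertices, joined by one edge. -/
def lollipop (t : ℕ) : SimpleGraph (Fin t ⊕ Fin 2) :=
  SimpleGraph.fromRel (fun a b =>
    match a, b with
    | Sum.inl _, Sum.inl _ => True
    | Sum.inr _, Sum.inr _ => True
    | Sum.inl a, Sum.inr b => (a : ℕ) = 0 ∧ (b : ℕ) = 0
    | Sum.inr _, Sum.inl _ => False)

/-- `G` has no induced subgraph isomorphic to the `t`-lollipop. -/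
def LollipopFree {V : Type*} (t : ℕ) (G : SimpleGraph V) : Prop :=
  ¬ Nonempty (lollipop t ↪g G)

/-- `S` is a split: any vertex outside `S` complete to `S` is adjacent to any vertex
outside `S` mixed on `S`. -/
def IsSplit {V : Type*} (G : SimpleGraph V) (S : Set V) : Prop :=
  ∀ v ∉ S, ∀ u ∉ S, (∀ s ∈ S, G.Adj v s) →
    (∃ s ∈ S, G.Adj u s) → (∃ s ∈ S, ¬ G.Adj u s) → G.Adj u v

/-- `S` is fair: every vertex of `N(S)` is complete to `S` or has `t-1` pairwise
adjacent non-neighbors in `S`. -/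
def IsFair {V : Type*} (t : ℕ) (G : SimpleGraph V) (S : Set V) : Prop :=
  ∀ v ∉ S, (∃ s ∈ S, G.Adj v s) →
    (∀ s ∈ S, G.Adj v s) ∨
    ∃ K : Finset V, (K : Set V) ⊆ S ∧ (∀ w ∈ K, ¬ G.Adj v w) ∧ G.IsNClique (t - 1) K

/-- Tidiness for graphs (with respect to `t`). -/
def Tidy {V : Type*} (t : ℕ) (H : SimpleGraph V) : Prop :=
  (∃ a b : V, a ≠ b) ∧
  ∀ M N : Set V, M.Nonempty → N.Nonempty → Disjoint M N → M ∪ N = Set.univ →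
    ((∃ K : Finset V, (K : Set V) ⊆ M ∧ H.IsNClique (t - 1) K ∧
        ∃ y ∈ N, ∀ w ∈ K, ¬ H.Adj y w) ∨
     (∃ K : Finset V, (K : Set V) ⊆ N ∧ H.IsNClique (t - 1) K ∧
        ∃ x ∈ M, ∃ y ∈ N, y ∉ K ∧ H.Adj x y ∧
          (∀ w ∈ K, ¬ H.Adj x w) ∧ (∀ w ∈ K, ¬ H.Adj y w)))

lemma lollipop_adj_ll (t : ℕ) (i j : Fin t) :
    (lollipop t).Adj (Sum.inl i) (Sum.inl j) ↔ i ≠ j := by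
  simp [lollipop, SimpleGraph.fromRel_adj]

lemma lollipop_adj_rr (t : ℕ) (i j : Fin 2) :
    (lollipop t).Adj (Sum.inr i) (Sum.inr j) ↔ i ≠ j := by
  simp [lollipop, SimpleGraph.fromRel_adj]

lemma lollipop_adj_lr (t : ℕ) (i : Fin t) (j : Fin 2) :
    (lollipop t).Adj (Sum.inl i) (Sum.inr j) ↔ ((i:ℕ) = 0 ∧ (j:ℕ) = 0) := by
  simp [lollipop, SimpleGraph.fromRel_adj]

lemma lollipop_adj_rl (t : ℕ) (i : Fin t) (j : Fin 2) :
    (lollipop t).Adj (Sum.inr j) (Sum.inl i) ↔ ((i:ℕ) = 0 ∧ (j:ℕ) = 0) := by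
  simp [lollipop, SimpleGraph.fromRel_adj]

lemma lollipop_embed {V : Type*} (G : SimpleGraph V) (t : ℕ) (ht : 3 ≤ t)
    (K : Finset V) (hK : G.IsNClique (t-1) K)
    (a b c : V) (haK : ∀ w ∈ K, G.Adj a w)
    (hba : G.Adj b a) (hbK : ∀ w ∈ K, ¬ G.Adj b w)
    (hcb : G.Adj c b) (hca : ¬ G.Adj c a) (hac : a ≠ c)
    (hcK : ∀ w ∈ K, ¬ G.Adj c w) :
    Nonempty (lollipop t ↪g G) := by
  have ha : a ∉ K := fun h => G.irrefl (haK a h)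
  have hcard2 : 2 ≤ K.card := by rw [hK.2]; omega
  have hb : b ∉ K := by
    intro h
    obtain ⟨w, hw, hwb⟩ := Finset.exists_mem_ne (show 1 < K.card by omega) b
    exact hbK w hw (hK.1 h hw hwb.symm)
  have hc : c ∉ K := by
    intro h
    obtain ⟨w, hw, hwc⟩ := Finset.exists_mem_ne (show 1 < K.card by omega) c
    exact hcK w hw (hK.1 h hw hwc.symm)
  have hab : a ≠ b := hba.ne'
  have hbc : b ≠ c := hcb.ne'
  let e : K ≃ Fin (t-1) := Finset.equivFinOfCardEq hK.2
  let g : Fin t → V := fun i =>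
    if h : (i : ℕ) = 0 then a else ↑(e.symm ⟨i.val - 1, by omega⟩)
  have g0 : ∀ i : Fin t, (i:ℕ) = 0 → g i = a := fun i h => dif_pos h
  have gK : ∀ i : Fin t, (i:ℕ) ≠ 0 → g i ∈ K := by
    intro i h
    simp only [g, dif_neg h]
    exact (e.symm _).2
  have ginj : Function.Injective g := by
    intro i j hij
    by_cases hi : (i:ℕ) = 0 <;> by_cases hj : (j:ℕ) = 0
    · exact Fin.ext (hi.trans hj.symm)
    · exact absurd ((g0 i hi ▸ hij) ▸ gK j hj) ha
    · exact absurd ((g0 j hj ▸ hij.symm) ▸ gK i hi) ha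
    · simp only [g, dif_neg hi, dif_neg hj] at hij
      have := e.symm.injective (Subtype.ext hij)
      have : i.val - 1 = j.val - 1 := Fin.mk.inj_iff.mp this
      exact Fin.ext (by omega)
  have gadj : ∀ i j : Fin t, i ≠ j → G.Adj (g i) (g j) := by
    intro i j hij
    by_cases hi : (i:ℕ) = 0 <;> by_cases hj : (j:ℕ) = 0
    · exact absurd (Fin.ext (hi.trans hj.symm)) hij
    · rw [g0 i hi]; exact haK _ (gK j hj)
    · rw [g0 j hj]; exact (haK _ (gK i hi)).symm
    · exact hK.1 (gK i hi) (gK j hj) (fun h => hij (ginj h))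
  let f : Fin t ⊕ Fin 2 → V := Sum.elim g (fun j => if (j:ℕ) = 0 then b else c)
  have hgb : ∀ i : Fin t, g i ≠ b := by
    intro i
    by_cases hi : (i:ℕ) = 0
    · rw [g0 i hi]; exact hab
    · exact fun h => hb (h ▸ gK i hi)
  have hgc : ∀ i : Fin t, g i ≠ c := by
    intro i
    by_cases hi : (i:ℕ) = 0
    · rw [g0 i hi]; exact hac
    · exact fun h => hc (h ▸ gK i hi)
  have finj : Function.Injective f := by
    intro u v huv
    match u, v with
    | Sum.inl i, Sum.inl j => exact congrArg Sum.inl (ginj huv)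
    | Sum.inr i, Sum.inr j =>
      congr 1
      simp only [f, Sum.elim_inr] at huv
      by_cases hi : (i:ℕ) = 0 <;> by_cases hj : (j:ℕ) = 0 <;>
        simp only [if_pos, if_neg, hi, hj, if_true, if_false, ite_true, ite_false] at huv <;>
        first
          | exact Fin.ext (hi.trans hj.symm)
          | exact absurd huv hbc
          | exact absurd huv.symm hbc
          | exact Fin.ext (by omega)
    | Sum.inl i, Sum.inr j =>
      exfalso
      simp only [f, Sum.elim_inl, Sum.elim_inr] at huv
      by_cases hj : (j:ℕ) = 0 <;> simp only [hj, ite_true, ite_false, if_pos, if_neg] at huv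
      · exact hgb i huv
      · exact hgc i huv
    | Sum.inr j, Sum.inl i =>
      exfalso
      simp only [f, Sum.elim_inl, Sum.elim_inr] at huv
      by_cases hj : (j:ℕ) = 0 <;> simp only [hj, ite_true, ite_false, if_pos, if_neg] at huv
      · exact hgb i huv.symm
      · exact hgc i huv.symm
  have cross : ∀ (i : Fin t) (j : Fin 2),
      G.Adj (g i) (f (Sum.inr j)) ↔ ((i:ℕ) = 0 ∧ (j:ℕ) = 0) := by
    intro i j
    by_cases hi : (i:ℕ) = 0 <;> by_cases hj : (j:ℕ) = 0
    · simp only [f, Sum.elim_inr, if_pos hj, g0 i hi, hi, hj, and_self, iff_true]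
      exact hba.symm
    · simp only [f, Sum.elim_inr, if_neg hj, g0 i hi, hi, hj, and_false, iff_false]
      exact fun h => hca h.symm
    · simp only [f, Sum.elim_inr, if_pos hj, hi, hj, false_and, iff_false]
      exact fun h => hbK _ (gK i hi) h.symm
    · simp only [f, Sum.elim_inr, if_neg hj, hi, hj, false_and, iff_false]
      exact fun h => hcK _ (gK i hi) h.symm
  refine ⟨⟨⟨f, finj⟩, ?_⟩⟩
  intro u v
  match u, v with
  | Sum.inl i, Sum.inl j =>
    rw [lollipop_adj_ll]
    exact ⟨fun h hij => absurd (congrArg g hij) h.ne, gadj i j⟩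
  | Sum.inr i, Sum.inr j =>
    rw [lollipop_adj_rr]
    show G.Adj (if (i:ℕ) = 0 then b else c) (if (j:ℕ) = 0 then b else c) ↔ i ≠ j
    by_cases hi : (i:ℕ) = 0 <;> by_cases hj : (j:ℕ) = 0 <;>
      simp only [hi, hj, ite_true, ite_false, if_pos, if_neg]
    · simp [G.irrefl, Fin.ext (hi.trans hj.symm)]
    · simpa [hcb.symm] using fun h => by omega
    · simpa [hcb] using fun h => by omega
    · constructor
      · intro h; exact absurd rfl h.ne
      · intro h; exact absurd (Fin.ext (by omega)) h
  | Sum.inl i, Sum.inr j =>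
    rw [lollipop_adj_lr]; exact cross i j
  | Sum.inr j, Sum.inl i =>
    rw [lollipop_adj_rl]
    exact (G.adj_comm _ _).trans (cross i j)

lemma clique_map_induce {V : Type*} (G : SimpleGraph V) (S : Set V) (n : ℕ)
    (K : Finset S) (hK : (G.induce S).IsNClique n K) :
    G.IsNClique n (K.map ⟨Subtype.val, Subtype.val_injective⟩) := by
  constructor
  · intro x hx y hy hxy
    simp only [Finset.coe_map, Set.mem_image, Finset.mem_coe] at hx hy
    obtain ⟨kx, hkx, rfl⟩ := hx
    obtain ⟨ky, hky, rfl⟩ := hy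
    exact hK.1 hkx hky (fun h => hxy (congrArg _ h))
  · rw [Finset.card_map]; exact hK.2

/-- If `G` is `t`-lollipop-free (`t ≥ 3`) and `G[S]` is tidy, then `S` is a fair split. -/
theorem tidy_is_fair_split {V : Type*} (G : SimpleGraph V) (t : ℕ) (ht : 3 ≤ t)
    (hfree : LollipopFree t G) (S : Set V) (hS : Tidy t (G.induce S)) :
    IsSplit G S ∧ IsFair t G S := by
  obtain ⟨-, htidy⟩ := hS
  constructor
  · -- Split
    intro v hv u hu hvc h1 h2
    obtain ⟨s1, hs1, hadj1⟩ := h1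
    obtain ⟨s2, hs2, hnadj2⟩ := h2
    by_contra huv
    have huvne : u ≠ v := by rintro rfl; exact hnadj2 (hvc s2 hs2)
    set M : Set S := {x | ¬ G.Adj u ↑x} with hMdef
    set N : Set S := {x | G.Adj u ↑x} with hNdef
    have hdisj : Disjoint M N := by
      rw [Set.disjoint_left]; intro x hx hx'; exact hx hx'
    have huniv : M ∪ N = Set.univ := by
      ext x; simp only [Set.mem_union, Set.mem_setOf_eq, Set.mem_univ, iff_true, M, N]
      tauto
    rcases htidy M N ⟨⟨s2, hs2⟩, hnadj2⟩ ⟨⟨s1, hs1⟩, hadj1⟩ hdisj huniv with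
      ⟨K, hKM, hKcl, y, hyN, hyK⟩ | ⟨K, hKN, hKcl, x, hxM, y, hyN, _, hxy, hxK, hyK2⟩
    · -- K among non-neighbors of u; lollipop (K∪{v}, y, u)
      refine hfree (lollipop_embed G t ht
        (K.map ⟨Subtype.val, Subtype.val_injective⟩) (clique_map_induce G S _ K hKcl)
        v ↑y u ?_ ((hvc ↑y y.2).symm) ?_ hyN huv huvne.symm ?_)
      · intro w hw
        obtain ⟨k, hk, rfl⟩ := Finset.mem_map.mp hw
        exact hvc ↑k k.2
      · intro w hw
        obtain ⟨k, hk, rfl⟩ := Finset.mem_map.mp hw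
        exact hyK k hk
      · intro w hw
        obtain ⟨k, hk, rfl⟩ := Finset.mem_map.mp hw
        exact hKM (Finset.mem_coe.mpr hk)
    · -- K among neighbors of u; lollipop (K∪{u}, y, x)
      refine hfree (lollipop_embed G t ht
        (K.map ⟨Subtype.val, Subtype.val_injective⟩) (clique_map_induce G S _ K hKcl)
        u ↑y ↑x ?_ hyN.symm ?_ hxy (fun h => hxM h.symm) (fun h => hu (h ▸ x.2)) ?_)
      · intro w hw
        obtain ⟨k, hk, rfl⟩ := Finset.mem_map.mp hw
        exact hKN (Finset.mem_coe.mpr hk)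
      · intro w hw
        obtain ⟨k, hk, rfl⟩ := Finset.mem_map.mp hw
        exact hyK2 k hk
      · intro w hw
        obtain ⟨k, hk, rfl⟩ := Finset.mem_map.mp hw
        exact hxK k hk
  · -- Fair
    intro v hv hmem
    obtain ⟨s1, hs1, hadj1⟩ := hmem
    by_cases hvc : ∀ s ∈ S, G.Adj v s
    · exact Or.inl hvc
    right
    push_neg at hvc
    obtain ⟨s2, hs2, hnadj2⟩ := hvc
    set M : Set S := {x | ¬ G.Adj v ↑x} with hMdef
    set N : Set S := {x | G.Adj v ↑x} with hNdef
    have hdisj : Disjoint M N := by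
      rw [Set.disjoint_left]; intro x hx hx'; exact hx hx'
    have huniv : M ∪ N = Set.univ := by
      ext x; simp only [Set.mem_union, Set.mem_setOf_eq, Set.mem_univ, iff_true, M, N]
      tauto
    rcases htidy M N ⟨⟨s2, hs2⟩, hnadj2⟩ ⟨⟨s1, hs1⟩, hadj1⟩ hdisj huniv with
      ⟨K, hKM, hKcl, y, hyN, hyK⟩ | ⟨K, hKN, hKcl, x, hxM, y, hyN, _, hxy, hxK, hyK2⟩
    · -- K among non-neighbors of v: fairness witness
      refine ⟨K.map ⟨Subtype.val, Subtype.val_injective⟩, ?_, ?_,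
        clique_map_induce G S _ K hKcl⟩
      · intro w hw
        simp only [Finset.coe_map, Set.mem_image, Finset.mem_coe] at hw
        obtain ⟨k, hk, rfl⟩ := hw
        exact k.2
      · intro w hw
        obtain ⟨k, hk, rfl⟩ := Finset.mem_map.mp hw
        exact hKM (Finset.mem_coe.mpr hk)
    · -- K among neighbors of v: lollipop (K∪{v}, y, x), contradiction
      exact absurd (lollipop_embed G t ht
        (K.map ⟨Subtype.val, Subtype.val_injective⟩) (clique_map_induce G S _ K hKcl)
        v ↑y ↑x
        (by intro w hw; obtain ⟨k, hk, rfl⟩ := Finset.mem_map.mp hw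
            exact hKN (Finset.mem_coe.mpr hk))
        hyN.symm
        (by intro w hw; obtain ⟨k, hk, rfl⟩ := Finset.mem_map.mp hw; exact hyK2 k hk)
        hxy (fun h => hxM h.symm) (fun h => hv (h ▸ x.2))
        (by intro w hw; obtain ⟨k, hk, rfl⟩ := Finset.mem_map.mp hw; exact hxK k hk))
        hfree
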